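/- If a finite graph G has a 2-vertex-connected orientation, then G is 4-edge-connected and G − v is 2-edge-connected for every vertex v. -/
import Mathlib


open Relation

/-- `D` is an orientation of the simple graph `G`: every arc is along an edge,
and every edge gets exactly one direction. -/
def IsOrientation {V : Type*} (G : SimpleGraph V) (D : V → V → Prop) : Prop :=
  (∀ a b, D a b → G.Adj a b) ∧ ∀ a b, G.Adj a b → (D a b ↔ ¬ D b a)

/-- The digraph given by the relation `D` is strongly connected. -/
def StrongConn {V : Type*} (D : V → V → Prop) : Prop :=
  ∀ a b : V, ReflTransGen D a b

/-- `D - v` is strongly connected. -/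
def StrongAvoid {V : Type*} (D : V → V → Prop) (v : V) : Prop :=
  ∀ a b : V, a ≠ v → b ≠ v →
    ReflTransGen (fun x y => D x y ∧ x ≠ v ∧ y ≠ v) a b

/-- `G` is `k`-edge-connected: every nonempty proper vertex set has at least
`k` boundary edges (each crossing edge counted once, ordered with first endpoint inside). -/
def EdgeConn {V : Type*} (G : SimpleGraph V) (k : ℕ) : Prop :=
  ∀ X : Set V, X.Nonempty → X ≠ Set.univ →
    k ≤ Nat.card {p : V × V // p.1 ∈ X ∧ p.2 ∉ X ∧ G.Adj p.1 p.2}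

/-- The digraph `D` is `k`-arc-connected: every nonempty proper vertex set has
at least `k` entering arcs. -/
def ArcConn {V : Type*} (D : V → V → Prop) (k : ℕ) : Prop :=
  ∀ X : Set V, X.Nonempty → X ≠ Set.univ →
    k ≤ Nat.card {p : V × V // D p.1 p.2 ∧ p.1 ∉ X ∧ p.2 ∈ X}

/-- `D` is 2-vertex-connected: at least 3 vertices, strongly connected, and
strongly connected after deleting any vertex. -/
def TwoVC {V : Type*} (D : V → V → Prop) : Prop :=
  3 ≤ Nat.card V ∧ StrongConn D ∧ ∀ v : V, StrongAvoid D v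

/-- If there is a path from outside `X` to inside `X`, some arc crosses into `X`. -/
lemma cross_lemma {V : Type*} {D : V → V → Prop} {X : Set V} {a b : V}
    (h : ReflTransGen D a b) (ha : a ∉ X) (hb : b ∈ X) :
    ∃ p : V × V, D p.1 p.2 ∧ p.1 ∉ X ∧ p.2 ∈ X := by
  induction h with
  | refl => exact absurd hb ha
  | tail h1 h2 ih =>
      rename_i c d
      by_cases hc : c ∈ X
      · exact ih hc
      · exact ⟨(c, d), h2, hc, hb⟩

/-- Counting: out-arcs plus in-arcs of `X` is at most the number of boundary edges. -/
lemma count_lemma {V : Type*} [Finite V] (G : SimpleGraph V) (D : V → V → Prop)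
    (hor : IsOrientation G D) (X : Set V) :
    Nat.card {p : V × V // D p.1 p.2 ∧ p.1 ∈ X ∧ p.2 ∉ X} +
      Nat.card {p : V × V // D p.1 p.2 ∧ p.1 ∉ X ∧ p.2 ∈ X} ≤
      Nat.card {p : V × V // p.1 ∈ X ∧ p.2 ∉ X ∧ G.Adj p.1 p.2} := by
  rw [← Nat.card_sum]
  apply Nat.card_le_card_of_injective
    (Sum.elim
      (fun q => (⟨q.1, q.2.2.1, q.2.2.2, hor.1 _ _ q.2.1⟩ :
        {p : V × V // p.1 ∈ X ∧ p.2 ∉ X ∧ G.Adj p.1 p.2}))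
      (fun q => ⟨(q.1.2, q.1.1), q.2.2.2, q.2.2.1, (hor.1 _ _ q.2.1).symm⟩))
  rintro (⟨p, hp⟩ | ⟨p, hp⟩) (⟨q, hq⟩ | ⟨q, hq⟩) h <;>
    simp only [Sum.elim_inl, Sum.elim_inr, Subtype.mk.injEq] at h
  · exact congrArg Sum.inl (Subtype.ext h)
  · exfalso
    have h1 : p.1 = q.2 := congrArg Prod.fst h
    have h2 : p.2 = q.1 := congrArg Prod.snd h
    have hD : D q.2 q.1 := by rw [← h1, ← h2]; exact hp.1
    exact ((hor.2 q.1 q.2 (hor.1 _ _ hq.1)).mp hq.1) hD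
  · exfalso
    have h1 : p.2 = q.1 := congrArg Prod.fst h
    have h2 : p.1 = q.2 := congrArg Prod.snd h
    have hD : D q.2 q.1 := by rw [← h1, ← h2]; exact hp.1
    exact ((hor.2 q.1 q.2 (hor.1 _ _ hq.1)).mp hq.1) hD
  · exact congrArg Sum.inr (Subtype.ext (Prod.ext (congrArg Prod.snd h) (congrArg Prod.fst h)))

/-- Strong connectivity gives at least one in-arc for every nonempty proper set. -/
lemma one_arc {V : Type*} [Finite V] {D : V → V → Prop} (hs : StrongConn D)
    {X : Set V} (hne : X.Nonempty) (hproper : X ≠ Set.univ) :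
    1 ≤ Nat.card {p : V × V // D p.1 p.2 ∧ p.1 ∉ X ∧ p.2 ∈ X} := by
  obtain ⟨b, hb⟩ := hne
  obtain ⟨a, ha⟩ : ∃ a, a ∉ X := by
    by_contra hc
    push_neg at hc
    exact hproper (Set.eq_univ_of_forall hc)
  obtain ⟨p, hp⟩ := cross_lemma (hs a b) ha hb
  have : Nonempty {p : V × V // D p.1 p.2 ∧ p.1 ∉ X ∧ p.2 ∈ X} := ⟨⟨p, hp⟩⟩
  exact Nat.card_pos

/-- 2-vertex-connectivity gives at least two in-arcs for every nonempty proper set. -/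
lemma two_arcs {V : Type*} [Finite V] {D : V → V → Prop} (h2 : TwoVC D)
    {X : Set V} (hne : X.Nonempty) (hproper : X ≠ Set.univ) :
    2 ≤ Nat.card {p : V × V // D p.1 p.2 ∧ p.1 ∉ X ∧ p.2 ∈ X} := by
  obtain ⟨hcard, hs, hav⟩ := h2
  by_contra hlt
  push_neg at hlt
  have hone := one_arc hs hne hproper
  have hsub : Subsingleton {p : V × V // D p.1 p.2 ∧ p.1 ∉ X ∧ p.2 ∈ X} :=
    not_nontrivial_iff_subsingleton.mp fun hn => by
      have := (Finite.one_lt_card_iff_nontrivial).mpr hn; omega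
  -- the unique entering arc
  obtain ⟨b, hb⟩ := hne
  obtain ⟨a, ha⟩ : ∃ a, a ∉ X := by
    by_contra hc
    push_neg at hc
    exact hproper (Set.eq_univ_of_forall hc)
  obtain ⟨⟨u, v⟩, hD, hu, hv⟩ := cross_lemma (hs a b) ha hb
  by_cases hXv : ∃ c ∈ X, c ≠ v
  · -- delete v; a path from outside into X avoiding v gives a second entering arc
    obtain ⟨c, hcX, hcv⟩ := hXv
    have hav' : a ≠ v := by rintro rfl; exact ha hv
    have hpath := hav v a c hav' hcv
    obtain ⟨p, hp⟩ := cross_lemma hpath ha hcX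
    have heq := hsub.elim (⟨p, hp.1.1, hp.2⟩ :
      {p : V × V // D p.1 p.2 ∧ p.1 ∉ X ∧ p.2 ∈ X}) ⟨(u, v), hD, hu, hv⟩
    have : p.2 = v := congrArg (fun q => (q : V × V).2) (congrArg Subtype.val heq)
    exact hp.1.2.2 this
  · -- X = {v}; delete u, a path to v avoiding u gives a second entering arc
    push_neg at hXv
    -- find w distinct from u and v
    obtain ⟨w, hwu, hwv⟩ : ∃ w, w ≠ u ∧ w ≠ v := by
      by_contra hc
      push_neg at hc
      have : (Set.univ : Set V) ⊆ {u, v} := by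
        intro x _
        rcases Classical.em (x = u) with h | h
        · exact Or.inl h
        · exact Or.inr (hc x h)
      have hle : Nat.card V ≤ 2 := by
        have h1 : (Set.univ : Set V).ncard ≤ ({u, v} : Set V).ncard :=
          Set.ncard_le_ncard this (Set.toFinite _)
        have h2 : ({u, v} : Set V).ncard ≤ 2 := by
          have := Set.ncard_insert_le u ({v} : Set V)
          simpa [Set.ncard_singleton] using this
        rw [← Set.ncard_univ]
        omega
      omega
    have hwX : w ∉ X := fun h => hwv (hXv w h)
    have hvu : v ≠ u := by rintro rfl; exact hu hv
    have hpath := hav u w v hwu hvu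
    obtain ⟨p, hp⟩ := cross_lemma hpath hwX hv
    have heq := hsub.elim (⟨p, hp.1.1, hp.2⟩ :
      {p : V × V // D p.1 p.2 ∧ p.1 ∉ X ∧ p.2 ∈ X}) ⟨(u, v), hD, hu, hv⟩
    have : p.1 = u := congrArg (fun q => (q : V × V).1) (congrArg Subtype.val heq)
    exact hp.1.2.1 this

/-- Lift a `v`-avoiding walk to the subtype of vertices distinct from `v`. -/
lemma lift_avoid {V : Type*} {D : V → V → Prop} {v a b : V}
    (h : ReflTransGen (fun x y => D x y ∧ x ≠ v ∧ y ≠ v) a b) (ha : a ≠ v) :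
    ∀ hb : b ≠ v,
      ReflTransGen (fun (x y : {u : V // u ≠ v}) => D x.1 y.1) ⟨a, ha⟩ ⟨b, hb⟩ := by
  induction h with
  | refl => intro hb; exact ReflTransGen.refl
  | tail h1 h2 ih => intro hb; exact (ih h2.2.1).tail h2.1

theorem stmt_2 {V : Type*} [Fintype V] (G : SimpleGraph V) (D : V → V → Prop)
    (hor : IsOrientation G D) (h2 : TwoVC D) :
    EdgeConn G 4 ∧ ∀ v : V, EdgeConn (SimpleGraph.induce {u : V | u ≠ v} G) 2 := by
  constructor
  · intro X hne hproper
    have hin := two_arcs h2 hne hproper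
    have hcne : Xᶜ.Nonempty := Set.nonempty_compl.mpr hproper
    have hcproper : Xᶜ ≠ Set.univ := fun h =>
      hne.ne_empty (Set.compl_univ_iff.mp h)
    have hout' := two_arcs h2 hcne hcproper
    have hout : 2 ≤ Nat.card {p : V × V // D p.1 p.2 ∧ p.1 ∈ X ∧ p.2 ∉ X} := by
      have hcc : Nat.card {p : V × V // D p.1 p.2 ∧ p.1 ∉ Xᶜ ∧ p.2 ∈ Xᶜ} =
          Nat.card {p : V × V // D p.1 p.2 ∧ p.1 ∈ X ∧ p.2 ∉ X} :=
        Nat.card_congr (Equiv.subtypeEquivRight (fun p => by simp))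
      omega
    have hct := count_lemma G D hor X
    omega
  · intro v X hne hproper
    have hor' : IsOrientation (SimpleGraph.induce {u : V | u ≠ v} G)
        (fun a b => D a.1 b.1) :=
      ⟨fun a b h => hor.1 _ _ h, fun a b h => hor.2 _ _ h⟩
    have hs' : StrongConn (fun (a b : {u : V | u ≠ v}) => D a.1 b.1) :=
      fun a b => lift_avoid (h2.2.2 v a.1 b.1 a.2 b.2) a.2 b.2
    have hin := one_arc hs' hne hproper
    have hcne : Xᶜ.Nonempty := Set.nonempty_compl.mpr hproper
    have hcproper : Xᶜ ≠ Set.univ := fun h =>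
      hne.ne_empty (Set.compl_univ_iff.mp h)
    have hout' := one_arc hs' hcne hcproper
    have hout : 1 ≤ Nat.card {p : ({u : V | u ≠ v} : Set V) × ({u : V | u ≠ v} : Set V) //
        D p.1.1 p.2.1 ∧ p.1 ∈ X ∧ p.2 ∉ X} := by
      have hcc : Nat.card {p : ({u : V | u ≠ v} : Set V) × ({u : V | u ≠ v} : Set V) //
          D p.1.1 p.2.1 ∧ p.1 ∉ Xᶜ ∧ p.2 ∈ Xᶜ} =
          Nat.card {p : ({u : V | u ≠ v} : Set V) × ({u : V | u ≠ v} : Set V) //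
          D p.1.1 p.2.1 ∧ p.1 ∈ X ∧ p.2 ∉ X} :=
        Nat.card_congr (Equiv.subtypeEquivRight (fun p => by simp))
      omega
    have hct := count_lemma (SimpleGraph.induce {u : V | u ≠ v} G)
      (fun a b => D a.1 b.1) hor' X
    omega
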